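/- Shortest-head-array case split: suppose s,h ⊨ Sorted(Arr(t,t') * Σ) ∧ (Arr(t,t') * Σ) and s,h ⊨ Sorted(Arr(t₀,t₀') * Σ₀) ∧ (Arr(t₀,t₀') * Σ₀). Then s(t) = s(t₀), and exactly one of: (i) s(t') = s(t₀'), and the restriction of h to Dom(h)∖[s(t),s(t')] satisfies both Σ̃ and Σ̃₀; (ii) s(t') < s(t₀'), and the restriction of h to Dom(h)∖[s(t),s(t')] satisfies Σ̃ and (Arr(t'+1,t₀') * Σ₀)~; (iii) s(t₀') < s(t'), symmetrically. -/

import Mathlib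

abbrev Var := ℕ
abbrev Store := Var → ℕ
abbrev Heap := ℕ → Option ℕ

def Dom (h : Heap) : Set ℕ := {n | h n ≠ none}

def hunion (h1 h2 : Heap) : Heap := fun n =>
  match h1 n with
  | some v => some v
  | none => h2 n

def hempty : Heap := fun _ => none

inductive Term
  | var : Var → Term
  | const : ℕ → Term
  | add : Term → Term → Term

def Term.eval (s : Store) : Term → ℕ
  | .var x => s x
  | .const n => n
  | .add t u => t.eval s + u.eval s

def Term.FV : Term → Set Var
  | .var x => {x}
  | .const _ => ∅
  | .add t u => t.FV ∪ u.FV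

inductive Formula
  | eq : Term → Term → Formula
  | and : Formula → Formula → Formula
  | not : Formula → Formula
  | ex : Var → Formula → Formula
  | emp : Formula
  | pto : Term → Term → Formula
  | arr : Term → Term → Formula
  | sep : Formula → Formula → Formula

def sat (s : Store) (h : Heap) : Formula → Prop
  | .eq t u => t.eval s = u.eval s
  | .and f g => sat s h f ∧ sat s h g
  | .not f => ¬ sat s h f
  | .ex x f => ∃ a : ℕ, sat (Function.update s x a) h f
  | .emp => Dom h = ∅
  | .pto t u => Dom h = {t.eval s} ∧ h (t.eval s) = some (u.eval s)
  | .arr t u => t.eval s ≤ u.eval s ∧ Dom h = Set.Icc (t.eval s) (u.eval s)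
  | .sep f g => ∃ h1 h2 : Heap, Dom h1 ∩ Dom h2 = ∅ ∧ h = hunion h1 h2 ∧ sat s h1 f ∧ sat s h2 g

def Formula.FV : Formula → Set Var
  | .eq t u => t.FV ∪ u.FV
  | .and f g => f.FV ∪ g.FV
  | .not f => f.FV
  | .ex x f => f.FV \ {x}
  | .emp => ∅
  | .pto t u => t.FV ∪ u.FV
  | .arr t u => t.FV ∪ u.FV
  | .sep f g => f.FV ∪ g.FV

inductive Atom
  | emp : Atom
  | pto : Term → Term → Atom
  | arr : Term → Term → Atom

abbrev Spatial := List Atom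

def satAtom (s : Store) (h : Heap) : Atom → Prop
  | .emp => Dom h = ∅
  | .pto t u => Dom h = {t.eval s} ∧ h (t.eval s) = some (u.eval s)
  | .arr t u => t.eval s ≤ u.eval s ∧ Dom h = Set.Icc (t.eval s) (u.eval s)

def satSp (s : Store) (h : Heap) : Spatial → Prop
  | [] => Dom h = ∅
  | a :: sg => ∃ h1 h2 : Heap, Dom h1 ∩ Dom h2 = ∅ ∧ h = hunion h1 h2 ∧
      satAtom s h1 a ∧ satSp s h2 sg

def ltSp (s : Store) (v : ℕ) : Spatial → Prop
  | [] => True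
  | .emp :: sg => ltSp s v sg
  | .pto t _ :: _ => v < t.eval s
  | .arr t _ :: _ => v < t.eval s

def sorted' (s : Store) : Spatial → Prop
  | [] => True
  | .emp :: sg => sorted' s sg
  | .pto t _ :: sg => ltSp s (t.eval s) sg ∧ sorted' s sg
  | .arr t u :: sg => t.eval s ≤ u.eval s ∧ ltSp s (u.eval s) sg ∧ sorted' s sg

def sortedSp (s : Store) (sg : Spatial) : Prop := ltSp s 0 sg ∧ sorted' s sg

def SDom (s : Store) : Spatial → Set ℕ
  | [] => ∅
  | .emp :: sg => SDom s sg
  | .pto t _ :: sg => {t.eval s} ∪ SDom s sg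
  | .arr t u :: sg => Set.Icc (t.eval s) (u.eval s) ∪ SDom s sg

/-- remove the addresses in the interval `[a,b]` from the heap `h` -/
def hminus (h : Heap) (a b : ℕ) : Heap := fun n => if a ≤ n ∧ n ≤ b then none else h n

lemma Dom_hunion (h1 h2 : Heap) : Dom (hunion h1 h2) = Dom h1 ∪ Dom h2 := by
  ext n
  simp only [Dom, hunion, Set.mem_setOf_eq, Set.mem_union]
  cases h1 n <;> simp

lemma ltSp_mono (s : Store) {v w : ℕ} (hvw : v ≤ w) :
    ∀ sg : Spatial, ltSp s w sg → ltSp s v sg := by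
  intro sg
  induction sg with
  | nil => intro _; trivial
  | cons a sg ih =>
    cases a with
    | emp => exact ih
    | pto t u => intro hh; exact lt_of_le_of_lt hvw hh
    | arr t u => intro hh; exact lt_of_le_of_lt hvw hh

lemma dom_gt (s : Store) : ∀ (sg : Spatial) (h : Heap) (v : ℕ),
    sorted' s sg → ltSp s v sg → satSp s h sg → ∀ n ∈ Dom h, v < n := by
  intro sg
  induction sg with
  | nil =>
    intro h v _ _ hs n hn
    simp only [satSp] at hs
    rw [hs] at hn
    exact absurd hn (Set.notMem_empty n)
  | cons a sg ih =>
    intro h v hso hlt hs n hn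
    obtain ⟨h1, h2, hdisj, rfl, ha, hs2⟩ := hs
    rw [Dom_hunion] at hn
    cases a with
    | emp =>
      simp only [satAtom] at ha
      rcases hn with hn | hn
      · rw [ha] at hn; exact absurd hn (Set.notMem_empty n)
      · exact ih h2 v hso hlt hs2 n hn
    | pto tt u =>
      obtain ⟨hlt', hso'⟩ := hso
      have hlt2 : v < Term.eval s tt := hlt
      rcases hn with hn | hn
      · rw [ha.1] at hn
        simp only [Set.mem_singleton_iff] at hn
        omega
      · exact lt_trans hlt (ih h2 _ hso' hlt' hs2 n hn)
    | arr tt u =>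
      obtain ⟨htu, hlt', hso'⟩ := hso
      have hlt2 : v < Term.eval s tt := hlt
      rcases hn with hn | hn
      · rw [ha.2] at hn
        exact lt_of_lt_of_le hlt hn.1
      · have := ih h2 _ hso' hlt' hs2 n hn
        omega

lemma hminus_eq (h h1 h2 : Heap) (a b : ℕ) (hu : h = hunion h1 h2)
    (hd1 : Dom h1 = Set.Icc a b) (hd2 : ∀ n ∈ Dom h2, b < n) :
    hminus h a b = h2 := by
  funext n
  show (if a ≤ n ∧ n ≤ b then none else h n) = h2 n
  by_cases hc : a ≤ n ∧ n ≤ b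
  · rw [if_pos hc]
    by_contra hne
    have hn2 : n ∈ Dom h2 := fun hh => hne hh.symm
    have := hd2 n hn2
    omega
  · rw [if_neg hc]
    have h1n : h1 n = none := by
      by_contra hne
      have : n ∈ Dom h1 := hne
      rw [hd1] at this
      exact hc ⟨this.1, this.2⟩
    rw [hu]
    show (match h1 n with | some v => some v | none => h2 n) = h2 n
    rw [h1n]

lemma split_tail (h h1 h2 : Heap) (a b c : ℕ) (hab : a ≤ b) (hbc : b < c)
    (hu : h = hunion h1 h2) (hd1 : Dom h1 = Set.Icc a c)
    (hd2 : ∀ n ∈ Dom h2, c < n) :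
    ∃ g : Heap, Dom g ∩ Dom h2 = ∅ ∧ hminus h a b = hunion g h2 ∧
      Dom g = Set.Icc (b + 1) c := by
  have hsub : ∀ n, a ≤ n → n ≤ c → ∃ v, h1 n = some v := by
    intro n h1n h2n
    have : n ∈ Dom h1 := by rw [hd1]; exact ⟨h1n, h2n⟩
    cases hv : h1 n with
    | none => exact absurd hv this
    | some v => exact ⟨v, rfl⟩
  refine ⟨fun n => if b + 1 ≤ n ∧ n ≤ c then h n else none, ?_, ?_, ?_⟩
  · ext n
    simp only [Set.mem_inter_iff, Set.mem_empty_iff_false, iff_false, not_and]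
    intro hg hn2
    have hgc : b + 1 ≤ n ∧ n ≤ c := by
      by_contra hc'
      exact hg (if_neg hc')
    have := hd2 n hn2
    omega
  · funext n
    show (if a ≤ n ∧ n ≤ b then none else h n) =
      hunion (fun n => if b + 1 ≤ n ∧ n ≤ c then h n else none) h2 n
    by_cases hc1 : a ≤ n ∧ n ≤ b
    · rw [if_pos hc1]
      have hn2 : h2 n = none := by
        cases hv : h2 n with
        | none => rfl
        | some v => have := hd2 n (by rw [Dom]; simp [hv]); omega
      show none = (match (if b + 1 ≤ n ∧ n ≤ c then h n else none) with
        | some v => some v | none => h2 n)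
      rw [if_neg (by omega : ¬(b + 1 ≤ n ∧ n ≤ c)), hn2]
    · rw [if_neg hc1]
      by_cases hc2 : b + 1 ≤ n ∧ n ≤ c
      · show h n = (match (if b + 1 ≤ n ∧ n ≤ c then h n else none) with
          | some v => some v | none => h2 n)
        rw [if_pos hc2]
        obtain ⟨v, hv⟩ := hsub n (by omega) hc2.2
        rw [hu]
        show (match h1 n with | some v => some v | none => h2 n) = _
        rw [hv]
        show some v = (match (match h1 n with | some v => some v | none => h2 n) with
          | some v => some v | none => h2 n)
        rw [hv]
      · have h1n : h1 n = none := by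
          cases hv : h1 n with
          | none => rfl
          | some v =>
            have : n ∈ Dom h1 := by rw [Dom]; simp [hv]
            rw [hd1] at this
            simp only [Set.mem_Icc] at this
            omega
        show h n = (match (if b + 1 ≤ n ∧ n ≤ c then h n else none) with
          | some v => some v | none => h2 n)
        rw [if_neg hc2, hu]
        show (match h1 n with | some v => some v | none => h2 n) = h2 n
        rw [h1n]
  · ext n
    simp only [Dom, Set.mem_setOf_eq, Set.mem_Icc]
    constructor
    · intro hn
      by_contra hc'
      rw [if_neg (by omega : ¬(b + 1 ≤ n ∧ n ≤ c))] at hn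
      exact hn rfl
    · intro hn
      rw [if_pos hn]
      obtain ⟨v, hv⟩ := hsub n (by omega) hn.2
      rw [hu]
      show (match h1 n with | some v => some v | none => h2 n) ≠ none
      rw [hv]
      exact fun hh => Option.some_ne_none _ hh

/-- shortest-head-array case split (semantic content of the
(ArrArr) clause of the translation `P`). -/
theorem stmt15 (s : Store) (h : Heap) (t t' t0 t0' : Term) (sg sg0 : Spatial)
    (h1 : sortedSp s (.arr t t' :: sg) ∧ satSp s h (.arr t t' :: sg))
    (h2 : sortedSp s (.arr t0 t0' :: sg0) ∧ satSp s h (.arr t0 t0' :: sg0)) :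
    t.eval s = t0.eval s ∧
    ((t'.eval s = t0'.eval s ∧
        sortedSp s sg ∧ satSp s (hminus h (t.eval s) (t'.eval s)) sg ∧
        sortedSp s sg0 ∧ satSp s (hminus h (t.eval s) (t'.eval s)) sg0) ∨
     (t'.eval s < t0'.eval s ∧
        sortedSp s sg ∧ satSp s (hminus h (t.eval s) (t'.eval s)) sg ∧
        sortedSp s (.arr (.add t' (.const 1)) t0' :: sg0) ∧
        satSp s (hminus h (t.eval s) (t'.eval s)) (.arr (.add t' (.const 1)) t0' :: sg0)) ∨
     (t0'.eval s < t'.eval s ∧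
        sortedSp s (.arr (.add t0' (.const 1)) t' :: sg) ∧
        satSp s (hminus h (t.eval s) (t0'.eval s)) (.arr (.add t0' (.const 1)) t' :: sg) ∧
        sortedSp s sg0 ∧ satSp s (hminus h (t.eval s) (t0'.eval s)) sg0)) := by
  obtain ⟨⟨hlt0, hsort⟩, hsat⟩ := h1
  obtain ⟨⟨hlt0', hsort'⟩, hsat'⟩ := h2
  obtain ⟨g1, g2, hdisj, hu, hatom, hs2⟩ := hsat
  obtain ⟨g1', g2', hdisj', hu', hatom', hs2'⟩ := hsat'
  obtain ⟨hab, hd1⟩ := hatom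
  obtain ⟨hab', hd1'⟩ := hatom'
  obtain ⟨htu, hltb, hso⟩ := hsort
  obtain ⟨htu', hltb', hso'⟩ := hsort'
  have hg2gt : ∀ n ∈ Dom g2, t'.eval s < n := dom_gt s sg g2 _ hso hltb hs2
  have hg2gt' : ∀ n ∈ Dom g2', t0'.eval s < n := dom_gt s sg0 g2' _ hso' hltb' hs2'
  -- s(t) = s(t0)
  have hamem : t.eval s ∈ Dom h := by
    rw [hu, Dom_hunion]; left; rw [hd1]; exact ⟨le_refl _, hab⟩
  have hamem' : t0.eval s ∈ Dom h := by
    rw [hu', Dom_hunion]; left; rw [hd1']; exact ⟨le_refl _, hab'⟩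
  have halb : ∀ n ∈ Dom h, t.eval s ≤ n := by
    rw [hu, Dom_hunion]
    rintro n (hn | hn)
    · rw [hd1] at hn; exact hn.1
    · have := hg2gt n hn; omega
  have halb' : ∀ n ∈ Dom h, t0.eval s ≤ n := by
    rw [hu', Dom_hunion]
    rintro n (hn | hn)
    · rw [hd1'] at hn; exact hn.1
    · have := hg2gt' n hn; omega
  have ha : t.eval s = t0.eval s :=
    le_antisymm (halb _ hamem') (halb' _ hamem)
  refine ⟨ha, ?_⟩
  have hsgOK : sortedSp s sg := ⟨ltSp_mono s (Nat.zero_le _) sg hltb, hso⟩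
  have hsg0OK : sortedSp s sg0 := ⟨ltSp_mono s (Nat.zero_le _) sg0 hltb', hso'⟩
  rcases lt_trichotomy (t'.eval s) (t0'.eval s) with hbb | hbb | hbb
  · -- case (ii): s(t') < s(t0')
    right; left
    have hme : hminus h (t.eval s) (t'.eval s) = g2 := hminus_eq h g1 g2 _ _ hu hd1 hg2gt
    obtain ⟨g, hgd, hge, hgdom⟩ := split_tail h g1' g2' (t.eval s) (t'.eval s)
      (t0'.eval s) hab hbb hu' (ha ▸ hd1') hg2gt'
    refine ⟨hbb, hsgOK, hme ▸ hs2, ⟨?_, ?_⟩, g, g2', hgd, hge, ⟨?_, ?_⟩, hs2'⟩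
    · show 0 < Term.eval s (.add t' (.const 1))
      simp [Term.eval]
    · show Term.eval s (.add t' (.const 1)) ≤ t0'.eval s ∧ _ ∧ _
      exact ⟨by simp [Term.eval]; omega, hltb', hso'⟩
    · show Term.eval s (.add t' (.const 1)) ≤ t0'.eval s
      simp [Term.eval]; omega
    · show Dom g = Set.Icc (Term.eval s (.add t' (.const 1))) (t0'.eval s)
      simpa [Term.eval] using hgdom
  · -- case (i): equal
    left
    have hme : hminus h (t.eval s) (t'.eval s) = g2 := hminus_eq h g1 g2 _ _ hu hd1 hg2gt
    have hme' : hminus h (t.eval s) (t'.eval s) = g2' := by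
      rw [ha, hbb]
      exact hminus_eq h g1' g2' _ _ hu' hd1' hg2gt'
    exact ⟨hbb, hsgOK, hme ▸ hs2, hsg0OK, hme' ▸ hs2'⟩
  · -- case (iii): s(t0') < s(t')
    right; right
    have hme' : hminus h (t.eval s) (t0'.eval s) = g2' := by
      rw [ha]
      exact hminus_eq h g1' g2' _ _ hu' hd1' hg2gt'
    obtain ⟨g, hgd, hge, hgdom⟩ := split_tail h g1 g2 (t.eval s) (t0'.eval s)
      (t'.eval s) (ha ▸ hab') hbb hu hd1 hg2gt
    refine ⟨hbb, ⟨?_, ?_⟩, ⟨g, g2, hgd, hge, ⟨?_, ?_⟩, hs2⟩, hsg0OK, hme' ▸ hs2'⟩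
    · show 0 < Term.eval s (.add t0' (.const 1))
      simp [Term.eval]
    · show Term.eval s (.add t0' (.const 1)) ≤ t'.eval s ∧ _ ∧ _
      exact ⟨by simp [Term.eval]; omega, hltb, hso⟩
    · show Term.eval s (.add t0' (.const 1)) ≤ t'.eval s
      simp [Term.eval]; omega
    · show Dom g = Set.Icc (Term.eval s (.add t0' (.const 1))) (t'.eval s)
      simpa [Term.eval] using hgdom
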